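/- Let T be an invertible real n×n matrix none of whose eigenvalues is of the form c·z with c ≥ 0 real and z a root of unity (equivalently, no eigenvalue of T has a power that is a nonnegative real number). Then no nonzero real vector v is an eigenvector of (Tᵀ)^{-k} for any k ≥ 1. Consequently, by the Strichartz–Wang criterion, the convex hull of the attractor F of {x ↦ T(x + d_j)} is not a polytope (assuming conv(D) is n-dimensional and ‖T‖ < 1). -/

import Mathlib

open Matrix Polynomial

/-- The operator norm of a real `n × n` matrix. -/
noncomputable def opNorm {n : ℕ} (M : Matrix (Fin n) (Fin n) ℝ) : ℝ :=
  ‖Matrix.toEuclideanCLM (𝕜 := ℝ) M‖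

/-- The standard inner product on `ℝⁿ`. -/
def dotp {n : ℕ} (v x : Fin n → ℝ) : ℝ := ∑ i, v i * x i

section Eigen

variable {n : ℕ}

/-- Evaluation of the characteristic polynomial. -/
lemma charpoly_isRoot_iff (M : Matrix (Fin n) (Fin n) ℂ) (t : ℂ) :
    M.charpoly.IsRoot t ↔ (t • (1 : Matrix (Fin n) (Fin n) ℂ) - M).det = 0 := by
  have h : M.charpoly.eval t = (t • (1 : Matrix (Fin n) (Fin n) ℂ) - M).det := by
    rw [Matrix.charpoly]
    rw [show (Matrix.charmatrix M).det.eval t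
          = (Polynomial.evalRingHom t) (Matrix.charmatrix M).det from rfl]
    rw [RingHom.map_det]
    congr 1
    ext i j
    by_cases hij : i = j
    · subst hij
      simp [RingHom.mapMatrix_apply, Matrix.charmatrix_apply_eq,
        Matrix.smul_apply, Matrix.one_apply]
    · simp [RingHom.mapMatrix_apply, Matrix.charmatrix_apply_ne _ _ _ hij,
        Matrix.smul_apply, Matrix.one_apply, hij]
  rw [Polynomial.IsRoot, h]

lemma det_sub_comm_zero (A B : Matrix (Fin n) (Fin n) ℂ) :
    (A - B).det = 0 ↔ (B - A).det = 0 := by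
  have h : B - A = -(A - B) := by rw [neg_sub]
  rw [h, Matrix.det_neg, mul_eq_zero]
  constructor
  · intro h; right; exact h
  · rintro (h | h)
    · exact absurd h (pow_ne_zero _ (by norm_num))
    · exact h

/-- If `det (B^m - μ•1) = 0` then some `lam` with `lam^m = μ` is a root of the
characteristic polynomial of `B`. -/
lemma exists_root_of_pow_det_eq_zero (B : Matrix (Fin n) (Fin n) ℂ) {m : ℕ} (hm : 1 ≤ m)
    {μ : ℂ} (h : (B ^ m - μ • (1 : Matrix (Fin n) (Fin n) ℂ)).det = 0) :
    ∃ lam : ℂ, lam ^ m = μ ∧ B.charpoly.IsRoot lam := by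
  classical
  set p : ℂ[X] := X ^ m - C μ with hp
  have hmonic : p.Monic := Polynomial.monic_X_pow_sub_C μ (by omega)
  have hsplit : p.Splits := IsAlgClosed.splits p
  have hfact : p = (p.roots.map fun a => X - C a).prod :=
    hsplit.eq_prod_roots_of_monic hmonic
  set L : List ℂ := p.roots.toList with hL
  have hLr : (L : Multiset ℂ) = p.roots := Multiset.coe_toList _
  have hfactL : p = (L.map fun a => X - C a).prod := by
    conv_lhs => rw [hfact, ← hLr]
    simp
  have haeval : Polynomial.aeval B p = B ^ m - μ • 1 := by
    rw [hp, map_sub, Polynomial.aeval_X_pow, Polynomial.aeval_C,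
      Algebra.algebraMap_eq_smul_one]
  have haeval2 : Polynomial.aeval B p
      = (L.map fun a => B - a • (1 : Matrix (Fin n) (Fin n) ℂ)).prod := by
    conv_lhs => rw [hfactL]
    rw [map_list_prod, List.map_map]
    congr 1
    apply List.map_congr_left
    intro a _
    simp [Function.comp, Algebra.algebraMap_eq_smul_one]
  have hdet : ((L.map fun a => B - a • (1 : Matrix (Fin n) (Fin n) ℂ)).prod).det = 0 := by
    rw [← haeval2, haeval, h]
  rw [← Matrix.coe_detMonoidHom, map_list_prod, List.map_map] at hdet
  rw [List.prod_eq_zero_iff] at hdet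
  obtain ⟨a, ha, hdeta⟩ := List.mem_map.1 hdet
  have haroot : a ∈ p.roots := by rw [← hLr]; exact_mod_cast ha
  refine ⟨a, ?_, ?_⟩
  · have h2 : p.eval a = 0 := (Polynomial.mem_roots (hmonic.ne_zero)).1 haroot
    rw [hp] at h2
    simpa [sub_eq_zero] using h2
  · rw [charpoly_isRoot_iff, ← det_sub_comm_zero]
    have : (B - a • (1 : Matrix (Fin n) (Fin n) ℂ)).det = 0 := by
      simpa [Matrix.coe_detMonoidHom, Function.comp] using hdeta
    exact this

variable (T : Matrix (Fin n) (Fin n) ℝ)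

/-- No root of the (complexified) characteristic polynomial has a real power,
given the hypothesis `heigs`. -/
lemma pow_im_ne_zero_of_root
    (hdet : IsUnit T.det)
    (heigs : ∀ lam : ℂ, ((T.map (algebraMap ℝ ℂ)).charpoly).IsRoot lam →
      ¬ ∃ (c : ℝ) (z : ℂ), 0 ≤ c ∧ lam = (c : ℂ) * z ∧ ∃ j : ℕ, 1 ≤ j ∧ z ^ j = 1)
    {lam : ℂ} (hroot : ((T.map (algebraMap ℝ ℂ)).charpoly).IsRoot lam) :
    ∀ j : ℕ, 1 ≤ j → (lam ^ j).im ≠ 0 := by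
  intro j hj him
  have hlam0 : lam ≠ 0 := by
    intro h0
    exact heigs lam hroot ⟨0, 1, le_refl 0, by simp [h0], 1, le_refl 1, one_pow 1⟩
  set r : ℝ := (lam ^ j).re with hr
  have hlamj : lam ^ j = (r : ℂ) := Complex.ext rfl (by simpa using him)
  have hrne : r ≠ 0 := by
    intro h0
    exact pow_ne_zero j hlam0 (by rw [hlamj, h0, Complex.ofReal_zero])
  set c : ℝ := ‖lam‖ with hc
  have hcpos : 0 < c := norm_pos_iff.mpr hlam0
  refine heigs lam hroot ⟨c, lam / (c : ℂ), le_of_lt hcpos, ?_, 2 * j, by omega, ?_⟩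
  · have hc0 : (c : ℂ) ≠ 0 := Complex.ofReal_ne_zero.2 (ne_of_gt hcpos)
    rw [mul_div_assoc', mul_comm, mul_div_assoc, div_self hc0, mul_one]
  · have habs : ‖lam ^ j‖ = c ^ j := by rw [norm_pow]
    have hcj : (c : ℝ) ^ j = |r| := by rw [← habs, hlamj, Complex.norm_real, Real.norm_eq_abs]
    have h1 : ((c : ℂ)) ^ (2 * j) = ((r : ℂ)) ^ 2 := by
      rw [two_mul, pow_add, ← Complex.ofReal_pow, ← Complex.ofReal_pow, hcj]
      rw [← Complex.ofReal_mul, ← abs_mul, abs_mul_self]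
      rw [sq, Complex.ofReal_mul]
    have h2 : lam ^ (2 * j) = ((r : ℂ)) ^ 2 := by
      rw [mul_comm, pow_mul, hlamj]
    rw [div_pow, h2, h1, div_self]
    exact pow_ne_zero 2 (by exact_mod_cast hrne)

end Eigen


section ConeAux

/-- For a complex number off the real axis, some power has nonpositive real part. -/
lemma exists_pow_re_nonpos (μ : ℂ) (him : μ.im ≠ 0) :
    ∃ k : ℕ, 1 ≤ k ∧ (μ ^ k).re ≤ 0 := by
  have hπ := Real.pi_pos
  set φ : ℝ := |Complex.arg μ| with hφ
  have hφpos : 0 < φ := abs_pos.2 (fun h => him ((Complex.arg_eq_zero_iff).1 h).2)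
  have hφle : φ ≤ Real.pi := Complex.abs_arg_le_pi μ
  have hφlt : φ < Real.pi := by
    rcases lt_or_eq_of_le hφle with h | h
    · exact h
    · exfalso
      rcases abs_eq (le_of_lt hπ) |>.1 h with h1 | h1
      · exact him ((Complex.arg_eq_pi_iff).1 h1).2
      · exact absurd h1 (ne_of_gt (Complex.neg_pi_lt_arg μ))
  obtain ⟨k₀, hk₀⟩ := exists_nat_ge (Real.pi / 2 / φ)
  have hex : ∃ k : ℕ, Real.pi / 2 ≤ (k : ℝ) * φ := by
    refine ⟨k₀, ?_⟩
    rw [div_le_iff₀ hφpos] at hk₀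
    linarith
  classical
  set k := Nat.find hex with hkdef
  have hk : Real.pi / 2 ≤ (k : ℝ) * φ := Nat.find_spec hex
  have hk1 : 1 ≤ k := by
    by_contra h
    have hk0 : k = 0 := by omega
    rw [hk0] at hk
    simp at hk
    linarith
  have hup : (k : ℝ) * φ ≤ Real.pi + Real.pi / 2 := by
    have hmin := Nat.find_min hex (show k - 1 < k by omega)
    push_neg at hmin
    have hcast : ((k : ℝ)) = ((k - 1 : ℕ) : ℝ) + 1 := by
      have : (k - 1) + 1 = k := by omega
      rw [← this]
      push_cast
      ring
    rw [hcast]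
    have : ((k - 1 : ℕ) : ℝ) * φ < Real.pi / 2 := hmin
    nlinarith
  refine ⟨k, hk1, ?_⟩
  set θ : ℝ := (k : ℝ) * Complex.arg μ with hθ
  have hpolar : μ = (‖μ‖ : ℂ) * Complex.exp ((Complex.arg μ : ℂ) * Complex.I) :=
    (Complex.norm_mul_exp_arg_mul_I μ).symm
  have hpow : μ ^ k = ((‖μ‖ ^ k : ℝ) : ℂ)
      * Complex.exp ((θ : ℂ) * Complex.I) := by
    conv_lhs => rw [hpolar]
    rw [mul_pow, ← Complex.exp_nat_mul, hθ]
    push_cast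
    ring_nf
  have hre : (μ ^ k).re = ‖μ‖ ^ k * Real.cos θ := by
    rw [hpow, Complex.exp_mul_I]
    simp only [Complex.mul_re, Complex.add_re, Complex.mul_im, Complex.add_im,
      Complex.cos_ofReal_re, Complex.sin_ofReal_im, Complex.cos_ofReal_im,
      Complex.sin_ofReal_re, Complex.I_re, Complex.I_im, Complex.ofReal_re, Complex.ofReal_im]
    ring
  rw [hre]
  have hcos : Real.cos θ ≤ 0 := by
    have habs : |θ| = (k : ℝ) * φ := by
      rw [hθ, abs_mul, Nat.abs_cast]
    rw [← Real.cos_abs, habs]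
    exact Real.cos_nonpos_of_pi_div_two_le_of_le hk (by linarith)
  have hpownn : (0:ℝ) ≤ ‖μ‖ ^ k := pow_nonneg (norm_nonneg _) k
  exact mul_nonpos_iff.2 (Or.inl ⟨hpownn, hcos⟩)

open scoped Classical in
/-- A choice of a power making the real part nonpositive. -/
noncomputable def kc (μ : ℂ) : ℕ :=
  if h : ∃ k : ℕ, 1 ≤ k ∧ (μ ^ k).re ≤ 0 then h.choose else 1

lemma kc_pos (μ : ℂ) : 1 ≤ kc μ := by
  unfold kc
  split_ifs with h
  · exact h.choose_spec.1
  · exact le_refl 1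

lemma kc_spec (μ : ℂ) (h : ∃ k : ℕ, 1 ≤ k ∧ (μ ^ k).re ≤ 0) : (μ ^ kc μ).re ≤ 0 := by
  unfold kc
  rw [dif_pos h]
  exact h.choose_spec.2

/-- A real quadratic-like polynomial with nonnegative coefficients that kills `μ`. -/
noncomputable def Qpoly (μ : ℂ) : Polynomial ℝ :=
  X ^ (2 * kc μ) + C (-2 * (μ ^ kc μ).re) * X ^ kc μ + C ((Complex.normSq μ) ^ kc μ)

lemma Qpoly_coeff_nonneg (μ : ℂ) (h : (μ ^ kc μ).re ≤ 0) :
    ∀ i, 0 ≤ (Qpoly μ).coeff i := by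
  intro i
  have h2 : (0:ℝ) ≤ -2 * (μ ^ kc μ).re := by linarith
  have h3 : (0:ℝ) ≤ (Complex.normSq μ) ^ kc μ := pow_nonneg (Complex.normSq_nonneg μ) _
  simp only [Qpoly, coeff_add, coeff_C_mul, coeff_X_pow, coeff_C]
  split_ifs <;> simp <;> linarith

lemma Qpoly_eval_zero (μ : ℂ) : (Qpoly μ).eval 0 = (Complex.normSq μ) ^ kc μ := by
  have hkc := kc_pos μ
  simp [Qpoly, zero_pow (show 2 * kc μ ≠ 0 by omega), zero_pow (show kc μ ≠ 0 by omega)]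

lemma Qpoly_root (μ : ℂ) : (X - C μ) ∣ (Qpoly μ).map (algebraMap ℝ ℂ) := by
  rw [Polynomial.dvd_iff_isRoot]
  simp only [Qpoly, Polynomial.map_add, Polynomial.map_mul, Polynomial.map_pow,
    Polynomial.map_X, Polynomial.map_C, Polynomial.IsRoot, Polynomial.eval_add,
    Polynomial.eval_mul, Polynomial.eval_pow, Polynomial.eval_X, Polynomial.eval_C]
  set w := μ ^ kc μ with hw
  have h1 : ((algebraMap ℝ ℂ) (-2 * w.re)) = -(w + (starRingEnd ℂ) w) := by
    rw [Complex.add_conj]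
    have : ((algebraMap ℝ ℂ) (-2 * w.re)) = ((-2 * w.re : ℝ) : ℂ) := rfl
    rw [this]
    push_cast
    ring
  have h2 : ((algebraMap ℝ ℂ) (Complex.normSq μ ^ kc μ)) = w * (starRingEnd ℂ) w := by
    have hc : ((Complex.normSq μ : ℝ) : ℂ) = μ * (starRingEnd ℂ) μ := (Complex.mul_conj μ).symm
    have : ((algebraMap ℝ ℂ) (Complex.normSq μ ^ kc μ))
        = ((Complex.normSq μ : ℝ) : ℂ) ^ kc μ := by push_cast; rfl
    rw [this, hc, mul_pow, hw, ← map_pow]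
  have h3 : μ ^ (2 * kc μ) = w ^ 2 := by rw [hw, mul_comm, pow_mul]
  rw [h3, h1, h2]
  ring

lemma list_coeff_nonneg_prod (l : List (Polynomial ℝ))
    (h : ∀ p ∈ l, ∀ i, 0 ≤ p.coeff i) : ∀ i, 0 ≤ (l.prod).coeff i := by
  induction l with
  | nil =>
    intro i
    rw [List.prod_nil, Polynomial.coeff_one]
    split_ifs <;> norm_num
  | cons p l ih =>
    intro i
    rw [List.prod_cons, Polynomial.coeff_mul]
    exact Finset.sum_nonneg fun x _ =>
      mul_nonneg (h p (by simp) _) (ih (fun r hr i => h r (by simp [hr]) i) _)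

lemma list_map_prod_dvd {l : List ℂ} (f g : ℂ → Polynomial ℂ) (h : ∀ a ∈ l, f a ∣ g a) :
    (l.map f).prod ∣ (l.map g).prod := by
  induction l with
  | nil => simp
  | cons a l ih =>
    rw [List.map_cons, List.map_cons, List.prod_cons, List.prod_cons]
    exact mul_dvd_mul (h a (by simp)) (ih fun b hb => h b (by simp [hb]))

end ConeAux

theorem stmt13 {n q : ℕ} (hn : 1 ≤ n) (hq : 0 < q) (T : Matrix (Fin n) (Fin n) ℝ)
    (hdet : IsUnit T.det) (hT : opNorm T < 1)
    (heigs : ∀ lam : ℂ, ((T.map (algebraMap ℝ ℂ)).charpoly).IsRoot lam →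
      ¬ ∃ (c : ℝ) (z : ℂ), 0 ≤ c ∧ lam = (c : ℂ) * z ∧ ∃ j : ℕ, 1 ≤ j ∧ z ^ j = 1)
    (d : Fin q → (Fin n → ℝ))
    (hfull : Module.finrank ℝ
      (affineSpan ℝ (convexHull ℝ (Set.range d))).direction = n)
    (F : Set (Fin n → ℝ)) (hFne : F.Nonempty) (hFcpt : IsCompact F)
    (hF : F = ⋃ j : Fin q, (fun x => T *ᵥ (x + d j)) '' F) :
    (∀ (v : Fin n → ℝ), v ≠ 0 → ∀ k : ℕ, 1 ≤ k →
      ¬ ∃ μ : ℝ, (T.transpose⁻¹ ^ k) *ᵥ v = μ • v) ∧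
    ¬ ∃ V : Finset (Fin n → ℝ), convexHull ℝ F = convexHull ℝ (V : Set (Fin n → ℝ)) := by
  classical
  have hdetT : T.det ≠ 0 := IsUnit.ne_zero hdet
  -- eigenvalue fact used in both parts:
  -- if `(T^m)ᵀ *ᵥ v = c • v` for real `v ≠ 0`, `m ≥ 1`, we get a contradiction
  have key : ∀ (m : ℕ), 1 ≤ m → ∀ (c : ℝ) (v : Fin n → ℝ), v ≠ 0 →
      ((T ^ m)ᵀ) *ᵥ v = c • v → False := by
    intro m hm c v hv heq
    -- det ((T^m)ᵀ - c•1) = 0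
    have hker : ((T ^ m)ᵀ - c • (1 : Matrix (Fin n) (Fin n) ℝ)) *ᵥ v = 0 := by
      rw [Matrix.sub_mulVec, heq, Matrix.smul_mulVec, Matrix.one_mulVec, sub_self]
    have hdet0 : ((T ^ m)ᵀ - c • (1 : Matrix (Fin n) (Fin n) ℝ)).det = 0 := by
      rw [← Matrix.exists_mulVec_eq_zero_iff]
      exact ⟨v, hv, hker⟩
    have hdet1 : ((T ^ m) - c • (1 : Matrix (Fin n) (Fin n) ℝ)).det = 0 := by
      rw [← Matrix.det_transpose, Matrix.transpose_sub, Matrix.transpose_smul,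
        Matrix.transpose_one]
      exact hdet0
    -- complexify
    set f := (algebraMap ℝ ℂ) with hf
    have hdet2' : (((algebraMap ℝ ℂ)).mapMatrix (T ^ m - c • (1 : Matrix (Fin n) (Fin n) ℝ))).det = 0 := by
      rw [← RingHom.map_det, hdet1, map_zero]
    have hmap : ((algebraMap ℝ ℂ)).mapMatrix (T ^ m - c • (1 : Matrix (Fin n) (Fin n) ℝ))
        = (T.map f) ^ m - (c : ℂ) • (1 : Matrix (Fin n) (Fin n) ℂ) := by
      rw [map_sub, map_pow, RingHom.mapMatrix_apply,
        Matrix.smul_one_eq_diagonal, RingHom.mapMatrix_apply,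
        Matrix.diagonal_map (map_zero _), Matrix.smul_one_eq_diagonal]
      rfl
    have hdet2 : ((T.map f) ^ m - (c : ℂ) • (1 : Matrix (Fin n) (Fin n) ℂ)).det = 0 := by
      rw [← hmap]; exact hdet2'
    obtain ⟨lam, hlm, hroot⟩ := exists_root_of_pow_det_eq_zero (T.map f) hm hdet2
    have him := pow_im_ne_zero_of_root T hdet heigs hroot m hm
    rw [hlm] at him
    exact him (by simp)
  constructor
  · -- Part 1
    intro v hv k hk hex
    obtain ⟨μ, hμ⟩ := hex
    have hdetA : IsUnit (Tᵀ).det := by rwa [Matrix.det_transpose]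
    have hdetAk : IsUnit ((Tᵀ) ^ k).det := by
      rw [Matrix.det_pow]; exact hdetA.pow k
    have hv2 : v = μ • ((Tᵀ) ^ k *ᵥ v) := by
      have happ := congrArg (fun w => ((Tᵀ) ^ k) *ᵥ w) hμ
      simpa [Matrix.mulVec_mulVec, Matrix.mul_nonsing_inv _ hdetAk, Matrix.one_mulVec,
        Matrix.mulVec_smul] using happ
    have hμ0 : μ ≠ 0 := by
      intro h0
      rw [h0, zero_smul] at hv2
      exact hv hv2
    have heig : ((T ^ k)ᵀ) *ᵥ v = μ⁻¹ • v := by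
      rw [Matrix.transpose_pow]
      have h3 : μ⁻¹ • v = μ⁻¹ • (μ • ((Tᵀ) ^ k *ᵥ v)) := by rw [← hv2]
      rw [h3, smul_smul, inv_mul_cancel₀ hμ0, one_smul]
    exact key k hk μ⁻¹ v hv heig
  · -- Part 2
    rintro ⟨V, hV⟩
    obtain ⟨x₀, hx₀⟩ := hFne
    set K : Set (Fin n → ℝ) := convexHull ℝ F with hK
    have hFK : F ⊆ K := subset_convexHull ℝ F
    have hKconv : Convex ℝ K := convex_convexHull ℝ F
    have hKcpt : IsCompact K := by
      rw [hV]
      exact Set.Finite.isCompact_convexHull (𝕜 := ℝ) V.finite_toSet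
    have hdotp_eq : ∀ (u x : Fin n → ℝ), dotp u x = u ⬝ᵥ x := fun _ _ => rfl
    -- the affine maps
    set gmap : Fin q → (Fin n → ℝ) → (Fin n → ℝ) := fun j x => T *ᵥ (x + d j) with hgmap
    have hgaff : ∀ (j : Fin q) (a b : ℝ) (x y : Fin n → ℝ), a + b = 1 →
        gmap j (a • x + b • y) = a • gmap j x + b • gmap j y := by
      intro j a b x y hab
      have hd : a • d j + b • d j = d j := by rw [← add_smul, hab, one_smul]
      have h1 : a • x + b • y + d j = a • (x + d j) + b • (y + d j) := by
        rw [smul_add, smul_add]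
        rw [show a • x + a • d j + (b • y + b • d j) = a • x + b • y + (a • d j + b • d j)
          from by abel, hd]
      show T *ᵥ (a • x + b • y + d j) = a • (T *ᵥ (x + d j)) + b • (T *ᵥ (y + d j))
      rw [h1, Matrix.mulVec_add, Matrix.mulVec_smul, Matrix.mulVec_smul]
    have hgF : ∀ (j : Fin q) (x : Fin n → ℝ), x ∈ F → gmap j x ∈ F := by
      intro j x hx
      have hmem : gmap j x ∈ ⋃ j : Fin q, (fun x => T *ᵥ (x + d j)) '' F :=
        Set.mem_iUnion.2 ⟨j, ⟨x, hx, rfl⟩⟩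
      rwa [← hF] at hmem
    have hgK : ∀ (j : Fin q) (x : Fin n → ℝ), x ∈ K → gmap j x ∈ K := by
      intro j x hx
      have hconv : Convex ℝ {y : Fin n → ℝ | gmap j y ∈ K} := by
        intro p hp r hr a b ha hb hab
        show gmap j (a • p + b • r) ∈ K
        rw [hgaff j a b p r hab]
        exact hKconv hp hr ha hb hab
      have hsub : F ⊆ {y : Fin n → ℝ | gmap j y ∈ K} := fun z hz => hFK (hgF j z hz)
      exact convexHull_min hsub hconv hx
    have hginj : ∀ j : Fin q, Function.Injective (gmap j) := by
      intro j x y hxy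
      have h2 := congrArg (fun w => T⁻¹ *ᵥ w) hxy
      simp only [hgmap, Matrix.mulVec_mulVec, Matrix.nonsing_inv_mul T hdet,
        Matrix.one_mulVec] at h2
      exact add_right_cancel h2
    -- extreme points
    set E : Set (Fin n → ℝ) := K.extremePoints ℝ with hE
    have hEF : E ⊆ F := extremePoints_convexHull_subset
    have hEV : E ⊆ (V : Set (Fin n → ℝ)) := by
      rw [hE, hV]
      exact extremePoints_convexHull_subset
    have hEfin : E.Finite := Set.Finite.subset V.finite_toSet hEV
    -- normal cones
    set N : (Fin n → ℝ) → Set (Fin n → ℝ) :=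
      fun e => {u : Fin n → ℝ | ∀ y ∈ K, dotp u y ≤ dotp u e} with hN
    -- full dimensionality
    have hvs : vectorSpan ℝ (Set.range d) = ⊤ := by
      rw [affineSpan_convexHull] at hfull
      rw [direction_affineSpan] at hfull
      apply Submodule.eq_top_of_finrank_eq
      rw [hfull, Module.finrank_pi, Fintype.card_fin]
    have hzero : ∀ (u : Fin n → ℝ) (c : ℝ), (∀ y ∈ F, dotp u y = c) → u = 0 := by
      intro u c hc
      set φ : (Fin n → ℝ) →ₗ[ℝ] ℝ :=
        { toFun := fun x => dotp u (T *ᵥ x)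
          map_add' := by
            intro x y
            rw [Matrix.mulVec_add, hdotp_eq, hdotp_eq, hdotp_eq, dotProduct_add]
          map_smul' := by
            intro mm x
            rw [Matrix.mulVec_smul, hdotp_eq, hdotp_eq, dotProduct_smul]
            simp } with hφ
      have hker : vectorSpan ℝ (Set.range d) ≤ LinearMap.ker φ := by
        rw [vectorSpan_def]
        apply Submodule.span_le.2
        rintro w hw
        obtain ⟨p, hp, p', hp', rfl⟩ := hw
        obtain ⟨j, rfl⟩ := hp
        obtain ⟨j', rfl⟩ := hp'
        simp only [SetLike.mem_coe, LinearMap.mem_ker]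
        show dotp u (T *ᵥ (d j - d j')) = 0
        have hTd : T *ᵥ (d j - d j') = gmap j x₀ - gmap j' x₀ := by
          simp only [hgmap]
          rw [← Matrix.mulVec_sub]
          congr 1
          abel
        rw [hTd, hdotp_eq, dotProduct_sub, ← hdotp_eq u, ← hdotp_eq u,
          hc _ (hgF j x₀ hx₀), hc _ (hgF j' x₀ hx₀), sub_self]
      have hker_top : ∀ z, φ z = 0 := by
        intro z
        have h2 : z ∈ LinearMap.ker φ := (hvs ▸ hker) Submodule.mem_top
        exact LinearMap.mem_ker.1 h2
      have huu : dotp u u = 0 := by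
        have h2 := hker_top (T⁻¹ *ᵥ u)
        simp only [hφ, LinearMap.coe_mk, AddHom.coe_mk] at h2
        rwa [Matrix.mulVec_mulVec, Matrix.mul_nonsing_inv T hdet, Matrix.one_mulVec] at h2
      funext i
      have hsum : ∑ i2, u i2 * u i2 = 0 := huu
      have h3 := (Finset.sum_eq_zero_iff_of_nonneg
        (fun i2 _ => mul_self_nonneg (u i2))).1 hsum i (Finset.mem_univ i)
      simpa [Pi.zero_apply] using mul_self_eq_zero.1 h3
    -- cone algebra
    have hNsmul : ∀ (e : Fin n → ℝ) (c : ℝ) (u : Fin n → ℝ), 0 ≤ c → u ∈ N e → c • u ∈ N e := by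
      intro e c u hcn hu y hy
      show dotp (c • u) y ≤ dotp (c • u) e
      rw [hdotp_eq, hdotp_eq, smul_dotProduct, smul_dotProduct, smul_eq_mul, smul_eq_mul]
      exact mul_le_mul_of_nonneg_left (hu y hy) hcn
    have hNadd : ∀ (e u w : Fin n → ℝ), u ∈ N e → w ∈ N e → u + w ∈ N e := by
      intro e u w hu hw y hy
      show dotp (u + w) y ≤ dotp (u + w) e
      rw [hdotp_eq, hdotp_eq, add_dotProduct, add_dotProduct]
      exact add_le_add (hu y hy) (hw y hy)
    have hNzero : ∀ e : Fin n → ℝ, (0 : Fin n → ℝ) ∈ N e := by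
      intro e y _
      show dotp 0 y ≤ dotp 0 e
      rw [hdotp_eq, hdotp_eq, zero_dotProduct, zero_dotProduct]
    have hNpointed : ∀ (e u : Fin n → ℝ), u ∈ N e → -u ∈ N e → u = 0 := by
      intro e u hu hnu
      apply hzero u (dotp u e)
      intro y hy
      have h1 : dotp u y ≤ dotp u e := hu y (hFK hy)
      have h2 : dotp (-u) y ≤ dotp (-u) e := hnu y (hFK hy)
      rw [hdotp_eq, hdotp_eq, neg_dotProduct, neg_dotProduct, ← hdotp_eq, ← hdotp_eq] at h2
      linarith
    have hNsum_mem : ∀ (e : Fin n → ℝ) (s : Finset ℕ) (f : ℕ → (Fin n → ℝ)),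
        (∀ i ∈ s, f i ∈ N e) → (∑ i ∈ s, f i) ∈ N e := by
      intro e s f
      induction s using Finset.induction_on with
      | empty => intro _; simpa using hNzero e
      | insert _ _ hnotmem ih =>
        rename_i aa ss
        intro h
        rw [Finset.sum_insert hnotmem]
        exact hNadd e _ _ (h _ (Finset.mem_insert_self _ _))
          (ih fun i hi => h i (Finset.mem_insert_of_mem hi))
    have hNsum_zero : ∀ (e : Fin n → ℝ) (s : Finset ℕ) (f : ℕ → (Fin n → ℝ)),
        (∀ i ∈ s, f i ∈ N e) → (∑ i ∈ s, f i) = 0 → ∀ i ∈ s, f i = 0 := by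
      intro e s f
      induction s using Finset.induction_on with
      | empty => intro _ _ i hi; exact absurd hi (Finset.notMem_empty i)
      | insert _ _ hnotmem ih =>
        rename_i aa ss
        intro h hsum i hi
        rw [Finset.sum_insert hnotmem] at hsum
        have hfa : f aa = 0 := by
          have hfaN : f aa ∈ N e := h _ (Finset.mem_insert_self _ _)
          have hrestN : (∑ i ∈ ss, f i) ∈ N e :=
            hNsum_mem e ss f (fun i hi => h i (Finset.mem_insert_of_mem hi))
          have heqneg : f aa = -(∑ i ∈ ss, f i) := by
            have := add_eq_zero_iff_eq_neg.1 hsum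
            exact this
          have hnegN : -(f aa) ∈ N e := by
            rw [heqneg, neg_neg]
            exact hrestN
          exact hNpointed e (f aa) hfaN hnegN
        rcases Finset.mem_insert.1 hi with rfl | hi2
        · exact hfa
        · apply ih (fun i hi => h i (Finset.mem_insert_of_mem hi)) _ i hi2
          rw [hfa, zero_add] at hsum
          exact hsum
    -- an extreme point with a nonzero normal vector
    have hKne : K.Nonempty := ⟨x₀, hFK hx₀⟩
    set i₀ : Fin n := ⟨0, hn⟩ with hi₀
    set u₀ : Fin n → ℝ := Pi.single i₀ 1 with hu₀def
    have hu₀ne : u₀ ≠ 0 := by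
      intro h
      have h2 := congrFun h i₀
      rw [hu₀def] at h2
      simp at h2
    have hcont : Continuous fun y : Fin n → ℝ => dotp u₀ y := by
      show Continuous fun y : Fin n → ℝ => ∑ i, u₀ i * y i
      exact continuous_finset_sum Finset.univ
        (fun i _ => continuous_const.mul (continuous_apply i))
    obtain ⟨e₁, he₁K, hmax⟩ := hKcpt.exists_isMaxOn hKne hcont.continuousOn
    have hmax' : ∀ y ∈ K, dotp u₀ y ≤ dotp u₀ e₁ := fun y hy => hmax hy
    set Ff : Set (Fin n → ℝ) := {x | x ∈ K ∧ dotp u₀ x = dotp u₀ e₁} with hFf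
    have hFfcpt : IsCompact Ff := by
      have hFfeq : Ff = K ∩ (fun y : Fin n → ℝ => dotp u₀ y) ⁻¹' {dotp u₀ e₁} := by
        ext x
        simp [hFf]
      rw [hFfeq]
      exact hKcpt.inter_right (isClosed_singleton.preimage hcont)
    have hFfne : Ff.Nonempty := ⟨e₁, he₁K, rfl⟩
    obtain ⟨e₀, he₀ext⟩ := hFfcpt.extremePoints_nonempty hFfne
    obtain ⟨he₀Ff, he₀x⟩ := mem_extremePoints.1 he₀ext
    have he₀E : e₀ ∈ E := by
      rw [hE, mem_extremePoints]
      refine ⟨he₀Ff.1, ?_⟩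
      intro x₁ hx₁ x₂ hx₂ hseg
      obtain ⟨a, b, ha, hb, hab, habe⟩ := hseg
      have hd1 : dotp u₀ x₁ ≤ dotp u₀ e₁ := hmax' x₁ hx₁
      have hd2 : dotp u₀ x₂ ≤ dotp u₀ e₁ := hmax' x₂ hx₂
      have hsum : a * dotp u₀ x₁ + b * dotp u₀ x₂ = dotp u₀ e₁ := by
        have hdd : dotp u₀ (a • x₁ + b • x₂) = a * dotp u₀ x₁ + b * dotp u₀ x₂ := by
          rw [hdotp_eq, hdotp_eq, hdotp_eq, dotProduct_add, dotProduct_smul, dotProduct_smul,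
            smul_eq_mul, smul_eq_mul]
        rw [← hdd, habe]
        exact he₀Ff.2
      have hfaceq : ∀ (al be p1 q1 : ℝ), 0 < al → 0 < be → al + be = 1 →
          p1 ≤ dotp u₀ e₁ → q1 ≤ dotp u₀ e₁ → al * p1 + be * q1 = dotp u₀ e₁ →
          p1 = dotp u₀ e₁ := by
        intro al be p1 q1 hal hbe habe1 hp1 hq1 hpq
        by_contra hne
        have hlt : p1 < dotp u₀ e₁ := lt_of_le_of_ne hp1 hne
        have hh1 : al * p1 < al * dotp u₀ e₁ := mul_lt_mul_of_pos_left hlt hal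
        have hh2 : be * q1 ≤ be * dotp u₀ e₁ := mul_le_mul_of_nonneg_left hq1 hbe.le
        have hh3 : al * dotp u₀ e₁ + be * dotp u₀ e₁ = dotp u₀ e₁ := by
          rw [← add_mul, habe1, one_mul]
        linarith
      have hx₁Ff : x₁ ∈ Ff := ⟨hx₁, hfaceq a b _ _ ha hb hab hd1 hd2 hsum⟩
      have hx₂Ff : x₂ ∈ Ff := ⟨hx₂, hfaceq b a _ _ hb ha (by linarith) hd2 hd1 (by linarith)⟩
      exact he₀x x₁ hx₁Ff x₂ hx₂Ff ⟨a, b, ha, hb, hab, habe⟩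
    have hu₀N : u₀ ∈ N e₀ := by
      intro y hy
      show dotp u₀ y ≤ dotp u₀ e₀
      rw [he₀Ff.2]
      exact hmax' y hy
    -- the step map on extreme points
    have hstep : ∀ e, e ∈ E → ∃ e', e' ∈ E ∧ ∀ u, u ∈ N e → (Tᵀ *ᵥ u) ∈ N e' := by
      intro e heE
      have heF : e ∈ F := hEF heE
      have hmem : e ∈ ⋃ j : Fin q, (fun x => T *ᵥ (x + d j)) '' F := by
        rw [← hF]; exact heF
      obtain ⟨j, x, hxF, hgx⟩ := Set.mem_iUnion.1 hmem
      have hgx' : gmap j x = e := hgx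
      obtain ⟨heK, heext⟩ := mem_extremePoints.1 heE
      refine ⟨x, ?_, ?_⟩
      · rw [hE, mem_extremePoints]
        refine ⟨hFK hxF, ?_⟩
        intro x₁ hx₁ x₂ hx₂ hseg
        obtain ⟨a, b, ha, hb, hab, habe⟩ := hseg
        have hge : a • gmap j x₁ + b • gmap j x₂ = e := by
          rw [← hgaff j a b x₁ x₂ hab, habe, hgx']
        have hres := heext (gmap j x₁) (hgK j x₁ hx₁) (gmap j x₂) (hgK j x₂ hx₂)
          ⟨a, b, ha, hb, hab, hge⟩
        constructor
        · apply hginj j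
          rw [hres.1, hgx']
        · apply hginj j
          rw [hres.2, hgx']
      · intro u hu y hyK
        show dotp (Tᵀ *ᵥ u) y ≤ dotp (Tᵀ *ᵥ u) x
        have hkey : ∀ z : Fin n → ℝ, dotp (Tᵀ *ᵥ u) z = dotp u (T *ᵥ z) := by
          intro z
          rw [hdotp_eq, hdotp_eq, Matrix.mulVec_transpose, ← dotProduct_mulVec]
        rw [hkey y, hkey x]
        have h1 : T *ᵥ y = gmap j y - T *ᵥ d j := by
          simp only [hgmap]
          rw [Matrix.mulVec_add]
          abel
        have h2 : T *ᵥ x = gmap j x - T *ᵥ d j := by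
          simp only [hgmap]
          rw [Matrix.mulVec_add]
          abel
        rw [h1, h2, hdotp_eq, hdotp_eq, dotProduct_sub, dotProduct_sub]
        have h3 : u ⬝ᵥ gmap j y ≤ u ⬝ᵥ gmap j x := by
          have h4 : dotp u (gmap j y) ≤ dotp u e := hu (gmap j y) (hgK j y hyK)
          rw [hgx']
          exact h4
        linarith
    -- iterate the step map
    set stepf : (Fin n → ℝ) → (Fin n → ℝ) :=
      fun e => if h : e ∈ E then (hstep e h).choose else e with hstepf
    have hstepfE : ∀ e (he : e ∈ E), stepf e ∈ E ∧ ∀ u, u ∈ N e → (Tᵀ *ᵥ u) ∈ N (stepf e) := by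
      intro e he
      have h2 := (hstep e he).choose_spec
      rw [hstepf]
      simp only [dif_pos he]
      exact h2
    set seq : ℕ → (Fin n → ℝ) := fun i => stepf^[i] e₀ with hseq
    have hseqE : ∀ i, seq i ∈ E := by
      intro i
      induction i with
      | zero => simpa [hseq] using he₀E
      | succ i ih =>
        have h2 : seq (i + 1) = stepf (seq i) := Function.iterate_succ_apply' _ _ _
        rw [h2]
        exact (hstepfE (seq i) ih).1
    have hseqcone : ∀ i u, u ∈ N (seq i) → (Tᵀ *ᵥ u) ∈ N (seq (i + 1)) := by
      intro i u hu
      have h2 : seq (i + 1) = stepf (seq i) := Function.iterate_succ_apply' _ _ _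
      rw [h2]
      exact (hstepfE (seq i) (hseqE i)).2 u hu
    have hiter : ∀ (t i : ℕ) (u : Fin n → ℝ), u ∈ N (seq i) →
        ((Tᵀ ^ t) *ᵥ u) ∈ N (seq (i + t)) := by
      intro t
      induction t with
      | zero => intro i u hu; simpa [pow_zero, Matrix.one_mulVec] using hu
      | succ t ih =>
        intro i u hu
        have h2 : (Tᵀ ^ (t + 1)) *ᵥ u = Tᵀ *ᵥ ((Tᵀ ^ t) *ᵥ u) := by
          rw [Matrix.mulVec_mulVec, ← pow_succ']
        rw [h2, show i + (t + 1) = (i + t) + 1 from by omega]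
        exact hseqcone (i + t) _ (ih i u hu)
    -- find a cycle
    haveI hEfinty : Finite ↥E := hEfin.to_subtype
    obtain ⟨i1, j1, hij1, heqf⟩ := Finite.exists_ne_map_eq_of_infinite
      (fun i : ℕ => (⟨seq i, hseqE i⟩ : ↥E))
    have heqseq' : seq i1 = seq j1 := by
      simpa [Subtype.ext_iff] using heqf
    obtain ⟨a, b, hab, heqseq⟩ : ∃ a b : ℕ, a < b ∧ seq a = seq b := by
      rcases lt_or_gt_of_ne hij1 with h | h
      · exact ⟨i1, j1, h, heqseq'⟩
      · exact ⟨j1, i1, h, heqseq'.symm⟩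
    set m : ℕ := b - a with hm_def
    have hm : 1 ≤ m := by omega
    set S : Matrix (Fin n) (Fin n) ℝ := Tᵀ ^ m with hS
    have hSC : ∀ u, u ∈ N (seq a) → (S *ᵥ u) ∈ N (seq a) := by
      intro u hu
      have h2 := hiter m a u hu
      rw [show a + m = b from by omega] at h2
      rw [heqseq]
      exact h2
    -- the starting vector
    set v : Fin n → ℝ := (Tᵀ ^ a) *ᵥ u₀ with hv_def
    have hvC : v ∈ N (seq a) := by
      have h2 := hiter a 0 u₀ (by simpa [hseq] using hu₀N)
      simpa using h2
    have hdetTt : IsUnit (Tᵀ).det := by rwa [Matrix.det_transpose]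
    have hdetTta : IsUnit ((Tᵀ ^ a)).det := by rw [Matrix.det_pow]; exact hdetTt.pow a
    have hvne : v ≠ 0 := by
      intro h0
      apply hu₀ne
      have h2 := congrArg (fun w => ((Tᵀ ^ a)⁻¹) *ᵥ w) h0
      simpa [hv_def, Matrix.mulVec_mulVec, Matrix.nonsing_inv_mul _ hdetTta,
        Matrix.one_mulVec] using h2
    have hSpow : ∀ i : ℕ, ((S ^ i) *ᵥ v) ∈ N (seq a) := by
      intro i
      induction i with
      | zero => simpa [pow_zero, Matrix.one_mulVec] using hvC
      | succ i ih =>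
        have h2 : (S ^ (i + 1)) *ᵥ v = S *ᵥ ((S ^ i) *ᵥ v) := by
          conv_rhs => rw [Matrix.mulVec_mulVec]
          exact congrArg (fun M => M *ᵥ v) (pow_succ' S i)
        rw [h2]
        exact hSC _ ih
    -- spectral analysis of S
    set Bc : Matrix (Fin n) (Fin n) ℂ := T.map (algebraMap ℝ ℂ) with hBc
    have hμprop : ∀ μ ∈ ((S.map (algebraMap ℝ ℂ)).charpoly).roots, μ.im ≠ 0 := by
      intro μ hμ
      have hrootμ : ((S.map (algebraMap ℝ ℂ)).charpoly).IsRoot μ :=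
        (Polynomial.mem_roots (Matrix.charpoly_monic _).ne_zero).1 hμ
      rw [charpoly_isRoot_iff] at hrootμ
      have hdet0 : ((S.map (algebraMap ℝ ℂ)) - μ • 1).det = 0 := by
        rw [det_sub_comm_zero]
        exact hrootμ
      have hSc : S.map (algebraMap ℝ ℂ) = ((Bc ^ m)ᵀ) := by
        rw [hS, hBc]
        have hmp : ((Tᵀ) ^ m).map (algebraMap ℝ ℂ) = ((Tᵀ).map (algebraMap ℝ ℂ)) ^ m := by
          have h3 := map_pow ((algebraMap ℝ ℂ).mapMatrix) (Tᵀ) m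
          simpa [RingHom.mapMatrix_apply] using h3
        rw [hmp, Matrix.transpose_map, ← Matrix.transpose_pow]
      have hdet1 : (Bc ^ m - μ • 1).det = 0 := by
        have hcalc : (Bc ^ m - μ • (1 : Matrix (Fin n) (Fin n) ℂ)).det
            = ((Bc ^ m)ᵀ - μ • (1 : Matrix (Fin n) (Fin n) ℂ)).det := by
          rw [← Matrix.det_transpose (Bc ^ m - μ • 1), Matrix.transpose_sub,
            Matrix.transpose_smul, Matrix.transpose_one]
        rw [hcalc, ← hSc]
        exact hdet0
      obtain ⟨lam, hlamm, hlamroot⟩ := exists_root_of_pow_det_eq_zero Bc hm hdet1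
      have him := pow_im_ne_zero_of_root T hdet heigs hlamroot m hm
      rwa [hlamm] at him
    -- the positive-coefficient annihilating polynomial
    set Rts : List ℂ := ((S.map (algebraMap ℝ ℂ)).charpoly).roots.toList with hRts
    have hRtsmem : ∀ μ ∈ Rts, μ.im ≠ 0 := by
      intro μ hμ
      exact hμprop μ (by rwa [← Multiset.mem_toList])
    set P : Polynomial ℝ := (Rts.map (fun μ => Qpoly μ)).prod with hP
    have hPnn : ∀ i, 0 ≤ P.coeff i := by
      apply list_coeff_nonneg_prod
      intro p hp
      obtain ⟨μ, hμmem, rfl⟩ := List.mem_map.1 hp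
      exact Qpoly_coeff_nonneg μ (kc_spec μ (exists_pow_re_nonpos μ (hRtsmem μ hμmem)))
    have hP0pos : 0 < P.coeff 0 := by
      rw [Polynomial.coeff_zero_eq_eval_zero, hP, Polynomial.eval_list_prod, List.map_map]
      apply List.prod_pos
      intro x hx
      obtain ⟨μ, hμmem, rfl⟩ := List.mem_map.1 hx
      have hμne : μ ≠ 0 := by
        intro h0
        apply hRtsmem μ hμmem
        rw [h0]
        simp
      show 0 < (Qpoly μ).eval 0
      rw [Qpoly_eval_zero]
      exact pow_pos (Complex.normSq_pos.2 hμne) _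
    have hdvdP : S.charpoly ∣ P := by
      rw [← map_dvd_map' (algebraMap ℝ ℂ)]
      rw [show (S.charpoly).map (algebraMap ℝ ℂ) = (S.map (algebraMap ℝ ℂ)).charpoly from
        (Matrix.charpoly_map S _).symm]
      have hmonicc : ((S.map (algebraMap ℝ ℂ)).charpoly).Monic := Matrix.charpoly_monic _
      have hfact := (IsAlgClosed.splits _).eq_prod_roots_of_monic hmonicc
      have hcoe : ((Rts : List ℂ) : Multiset ℂ) = ((S.map (algebraMap ℝ ℂ)).charpoly).roots :=
        Multiset.coe_toList _
      have hfactL : (S.map (algebraMap ℝ ℂ)).charpoly = (Rts.map (fun μ => X - C μ)).prod := by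
        conv_lhs => rw [hfact, ← hcoe]
        simp
      rw [hfactL]
      have hPmap : P.map (algebraMap ℝ ℂ)
          = (Rts.map (fun μ => (Qpoly μ).map (algebraMap ℝ ℂ))).prod := by
        rw [hP]
        have h3 := map_list_prod (Polynomial.mapRingHom (algebraMap ℝ ℂ))
          (Rts.map (fun μ => Qpoly μ))
        simp only [Polynomial.coe_mapRingHom] at h3
        rw [h3, List.map_map]
        rfl
      rw [hPmap]
      exact list_map_prod_dvd _ _ (fun aa _ => Qpoly_root aa)
    obtain ⟨gq, hgq⟩ := hdvdP
    have haeval0 : Polynomial.aeval S P = 0 := by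
      rw [hgq, _root_.map_mul, Matrix.aeval_self_charpoly, zero_mul]
    have hsum_mulVec : ∀ (s : Finset ℕ) (f : ℕ → Matrix (Fin n) (Fin n) ℝ) (w : Fin n → ℝ),
        (∑ i ∈ s, f i) *ᵥ w = ∑ i ∈ s, (f i) *ᵥ w := by
      intro s f w
      induction s using Finset.induction_on with
      | empty => simp [Matrix.zero_mulVec]
      | insert _ _ hnotmem ih =>
        rename_i aa ss
        rw [Finset.sum_insert hnotmem, Finset.sum_insert hnotmem, Matrix.add_mulVec, ih]
    have hsum0 : ∑ i ∈ Finset.range (P.natDegree + 1), P.coeff i • ((S ^ i) *ᵥ v) = 0 := by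
      have h1 : Polynomial.aeval S P
          = ∑ i ∈ Finset.range (P.natDegree + 1), P.coeff i • S ^ i :=
        Polynomial.aeval_eq_sum_range S
      have h2 : (∑ i ∈ Finset.range (P.natDegree + 1), P.coeff i • S ^ i) = 0 := by
        rw [← h1]
        exact haeval0
      have h3 := congrArg (fun M => M *ᵥ v) h2
      rw [hsum_mulVec, Matrix.zero_mulVec] at h3
      rw [← h3]
      apply Finset.sum_congr rfl
      intro i _
      rw [Matrix.smul_mulVec]
    have hterm : ∀ i ∈ Finset.range (P.natDegree + 1), P.coeff i • ((S ^ i) *ᵥ v) ∈ N (seq a) := by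
      intro i _
      exact hNsmul _ _ _ (hPnn i) (hSpow i)
    have hall := hNsum_zero (seq a) (Finset.range (P.natDegree + 1)) _ hterm hsum0
    have h00 := hall 0 (Finset.mem_range.2 (Nat.succ_pos _))
    rw [pow_zero, Matrix.one_mulVec] at h00
    rcases smul_eq_zero.1 h00 with h | h
    · exact absurd h (ne_of_gt hP0pos)
    · exact hvne h
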